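/- For any vector ψ ∈ ℂ^d and integer 1 ≤ m ≤ d, the m-distillation norm admits the dual representation ‖ψ‖_{[m]} = max { |⟨ψ, ω⟩| : ω ∈ ℂ^d, ‖ω‖_∞ ≤ 1, ‖ω‖₂ = √m }. -/

import Mathlib

open Matrix BigOperators Complex ComplexOrder

noncomputable section

variable {ι : Type*} [Fintype ι] [DecidableEq ι]

/-- A density matrix: positive semidefinite with unit trace. -/
def IsDensityMatrix (ρ : Matrix ι ι ℂ) : Prop := ρ.PosSemidef ∧ ρ.trace = 1

/-- The rank-one projector |ψ⟩⟨ψ| associated to a vector. -/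
def pureState (ψ : ι → ℂ) : Matrix ι ι ℂ := Matrix.of fun i j => ψ i * (starRingEnd ℂ) (ψ j)

/-- The trace norm ‖A‖₁ = Tr √(AᴴA). -/
def traceNorm (A : Matrix ι ι ℂ) : ℝ :=
  ((((Matrix.isHermitian_conjTranspose_mul_self A).eigenvectorUnitary : Matrix ι ι ℂ) *
    diagonal (((↑) : ℝ → ℂ) ∘ Real.sqrt ∘ (Matrix.isHermitian_conjTranspose_mul_self A).eigenvalues) *
    (star ((Matrix.isHermitian_conjTranspose_mul_self A).eigenvectorUnitary : Matrix ι ι ℂ))).trace).re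

open Classical in
/-- Matrix square root (junk value 0 on matrices that are not PSD). -/
def matSqrt (A : Matrix ι ι ℂ) : Matrix ι ι ℂ := if h : A.PosSemidef then
  (h.1.eigenvectorUnitary : Matrix ι ι ℂ) * diagonal (((↑) : ℝ → ℂ) ∘ Real.sqrt ∘ h.1.eigenvalues) *
    (star (h.1.eigenvectorUnitary : Matrix ι ι ℂ)) else 0

/-- Fidelity F(ρ,σ) = ‖√ρ√σ‖₁². -/
def fidelity (ρ σ : Matrix ι ι ℂ) : ℝ := (traceNorm (matSqrt ρ * matSqrt σ))^2

/-- The dephasing map Δ, keeping only the diagonal. -/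
def deph (ρ : Matrix ι ι ℂ) : Matrix ι ι ℂ := Matrix.diagonal (fun i => ρ i i)

/-- The m-distillation norm ‖ψ‖_{[m]} = min_x (‖ψ-x‖₁ + √m ‖x‖₂). -/
def distNorm (m : ℕ) (ψ : ι → ℂ) : ℝ :=
  ⨅ x : ι → ℂ, ((∑ i, ‖ψ i - x i‖) +
    Real.sqrt m * Real.sqrt (∑ i, (‖x i‖)^2))

/-- M_m: convex combinations of pure states with ℓ∞ norm at most 1/√m. -/
def Mset (m : ℕ) : Set (Matrix ι ι ℂ) :=
  {ω | ∃ (n : ℕ) (p : Fin n → ℝ) (ψ : Fin n → ι → ℂ),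
    (∀ i, 0 ≤ p i) ∧ (∑ i, p i = 1) ∧
    (∀ i, ∑ j, (‖ψ i j‖)^2 = 1) ∧
    (∀ i j, ‖ψ i j‖ ≤ 1 / Real.sqrt m) ∧
    ω = ∑ i, p i • pureState (ψ i)}

/-- N_m: density matrices with all diagonal entries at most 1/m. -/
def Nset (m : ℕ) : Set (Matrix ι ι ℂ) :=
  {ω | IsDensityMatrix ω ∧ ∀ i, (ω i i).re ≤ 1 / m}

/-- Optimal fidelity of assisted distillation F_A(ρ,m) = max_{ω ∈ M_m} F(ρ,ω). -/
def FA (ρ : Matrix ι ι ℂ) (m : ℕ) : ℝ :=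
  sSup {r : ℝ | ∃ ω ∈ Mset (ι := ι) m, r = fidelity ρ ω}



section Helpers
open Finset in

-- per-x upper bound
lemma aux_upper {d : ℕ} (ψ ω x : Fin d → ℂ) (m : ℕ)
    (h1 : ∀ i, ‖ω i‖ ≤ 1) (h2 : ∑ i, (‖ω i‖)^2 = m) :
    ‖∑ i, (starRingEnd ℂ) (ψ i) * ω i‖ ≤
      (∑ i, ‖ψ i - x i‖) + Real.sqrt m * Real.sqrt (∑ i, (‖x i‖)^2) := by
  have hsplit : ∑ i, (starRingEnd ℂ) (ψ i) * ω i =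
      (∑ i, (starRingEnd ℂ) (ψ i - x i) * ω i) + ∑ i, (starRingEnd ℂ) (x i) * ω i := by
    rw [← Finset.sum_add_distrib]
    refine Finset.sum_congr rfl fun i _ => ?_
    simp [_root_.map_sub]; ring
  have tri : ‖∑ i, (starRingEnd ℂ) (ψ i) * ω i‖ ≤
      ‖∑ i, (starRingEnd ℂ) (ψ i - x i) * ω i‖ +
      ‖∑ i, (starRingEnd ℂ) (x i) * ω i‖ := by
    rw [hsplit]; exact norm_add_le _ _
  have hA : ‖∑ i, (starRingEnd ℂ) (ψ i - x i) * ω i‖ ≤ ∑ i, ‖ψ i - x i‖ := by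
    refine (norm_sum_le _ _).trans (Finset.sum_le_sum fun i _ => ?_)
    rw [norm_mul, Complex.norm_conj]
    exact mul_le_of_le_one_right (norm_nonneg _) (h1 i)
  have hB : ‖∑ i, (starRingEnd ℂ) (x i) * ω i‖ ≤
      Real.sqrt (∑ i, (‖x i‖)^2) * Real.sqrt m := by
    have s1 : ‖∑ i, (starRingEnd ℂ) (x i) * ω i‖ ≤
        ∑ i, ‖x i‖ * ‖ω i‖ := by
      refine (norm_sum_le _ _).trans (Finset.sum_le_sum fun i _ => ?_)
      rw [norm_mul, Complex.norm_conj]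
    have s2 : (∑ i, ‖x i‖ * ‖ω i‖) ^ 2 ≤
        (∑ i, (‖x i‖)^2) * ∑ i, (‖ω i‖)^2 :=
      Finset.sum_mul_sq_le_sq_mul_sq _ _ _
    have hnn : 0 ≤ ∑ i, ‖x i‖ * ‖ω i‖ :=
      Finset.sum_nonneg fun i _ => mul_nonneg (norm_nonneg _) (norm_nonneg _)
    have s3 : (∑ i, ‖x i‖ * ‖ω i‖) ≤
        Real.sqrt ((∑ i, (‖x i‖)^2) * ∑ i, (‖ω i‖)^2) := by
      rw [show (∑ i, ‖x i‖ * ‖ω i‖) =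
        Real.sqrt ((∑ i, ‖x i‖ * ‖ω i‖)^2) from (Real.sqrt_sq hnn).symm]
      exact Real.sqrt_le_sqrt s2
    calc ‖∑ i, (starRingEnd ℂ) (x i) * ω i‖
        ≤ ∑ i, ‖x i‖ * ‖ω i‖ := s1
      _ ≤ Real.sqrt ((∑ i, (‖x i‖)^2) * ∑ i, (‖ω i‖)^2) := s3
      _ = Real.sqrt (∑ i, (‖x i‖)^2) * Real.sqrt m := by
          rw [h2, Real.sqrt_mul (Finset.sum_nonneg fun i _ => sq_nonneg _)]
  calc ‖∑ i, (starRingEnd ℂ) (ψ i) * ω i‖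
      ≤ _ + _ := tri
    _ ≤ (∑ i, ‖ψ i - x i‖) + Real.sqrt (∑ i, (‖x i‖)^2) * Real.sqrt m :=
        add_le_add hA hB
    _ = _ := by ring

open Finset in

lemma caseA {d : ℕ} (ψ : Fin d → ℂ) (m : ℕ) (hm : 1 ≤ m) (hmd : m ≤ d)
    (hS : (Finset.univ.filter (fun i => ψ i ≠ 0)).card < m) :
    ∃ ω : Fin d → ℂ, (∀ i, ‖ω i‖ ≤ 1) ∧ (∑ i, (‖ω i‖)^2 = m) ∧
      ‖∑ i, (starRingEnd ℂ) (ψ i) * ω i‖ =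
        (∑ i, ‖ψ i - 0‖) + Real.sqrt m * Real.sqrt (∑ i, (‖(0:Fin d → ℂ) i‖)^2) := by
  classical
  set S := Finset.univ.filter (fun i => ψ i ≠ 0) with hSdef
  set Z := Finset.univ.filter (fun i => ψ i = 0) with hZdef
  have hcards : Z.card + S.card = d := by
    have := Finset.card_filter_add_card_filter_not (s := (Finset.univ : Finset (Fin d)))
      (p := fun i => ψ i = 0)
    simpa [hSdef, hZdef, Finset.card_univ] using this
  have hT : m - S.card ≤ Z.card := by omega
  obtain ⟨T, hTZ, hTcard⟩ := Finset.exists_subset_card_eq hT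
  refine ⟨fun i => if ψ i = 0 then (if i ∈ T then 1 else 0) else (↑((‖ψ i‖)⁻¹) : ℂ) * ψ i,
    ?_, ?_, ?_⟩
  · intro i
    by_cases h : ψ i = 0
    · by_cases h2 : i ∈ T <;> simp [h, h2]
    · have ha : 0 < ‖ψ i‖ := by simpa using h
      simp only [h, if_false, norm_mul, Complex.norm_real, Real.norm_eq_abs, _root_.abs_of_nonneg (inv_nonneg.2 ha.le)]
      rw [inv_mul_cancel₀ ha.ne']
  · have hper : ∀ i, (‖if ψ i = 0 then (if i ∈ T then 1 else 0)
        else (↑((‖ψ i‖)⁻¹) : ℂ) * ψ i‖)^2 =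
        (if i ∈ S then (1:ℝ) else 0) + (if i ∈ T then (1:ℝ) else 0) := by
      intro i
      by_cases h : ψ i = 0
      · have hiS : i ∉ S := by simp [hSdef, h]
        by_cases h2 : i ∈ T <;> simp [h, h2, hiS]
      · have hiS : i ∈ S := by simp [hSdef, h]
        have hiT : i ∉ T := fun hc => h (by simpa [hZdef] using hTZ hc)
        have ha : 0 < ‖ψ i‖ := by simpa using h
        simp only [h, if_false, hiS, if_true, hiT, norm_mul, Complex.norm_real, Real.norm_eq_abs,
          _root_.abs_of_nonneg (inv_nonneg.2 ha.le), inv_mul_cancel₀ ha.ne']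
        norm_num
    rw [Finset.sum_congr rfl fun i _ => hper i, Finset.sum_add_distrib]
    have h1 : ∑ i, (if i ∈ S then (1:ℝ) else 0) = S.card := by
      rw [Finset.sum_ite_mem, Finset.univ_inter, Finset.sum_const, nsmul_eq_mul, mul_one]
    have h2 : ∑ i, (if i ∈ T then (1:ℝ) else 0) = T.card := by
      rw [Finset.sum_ite_mem, Finset.univ_inter, Finset.sum_const, nsmul_eq_mul, mul_one]
    rw [h1, h2, hTcard]
    have : S.card + (m - S.card) = m := by omega
    rw [← Nat.cast_add, this]
  · have hper : ∀ i, (starRingEnd ℂ) (ψ i) * (if ψ i = 0 then (if i ∈ T then 1 else 0)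
        else (↑((‖ψ i‖)⁻¹) : ℂ) * ψ i) = ((‖ψ i‖ : ℝ) : ℂ) := by
      intro i
      by_cases h : ψ i = 0
      · simp [h]
      · have ha : 0 < ‖ψ i‖ := by simpa using h
        simp only [h, if_false]
        rw [show (starRingEnd ℂ) (ψ i) * ((↑((‖ψ i‖)⁻¹) : ℂ) * ψ i)
            = (↑((‖ψ i‖)⁻¹) : ℂ) * ((ψ i) * (starRingEnd ℂ) (ψ i)) by ring,
          Complex.mul_conj]
        rw [← Complex.ofReal_mul]
        congr 1
        rw [← Complex.sq_norm]
        field_simp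
    rw [Finset.sum_congr rfl fun i _ => hper i, ← Complex.ofReal_sum, Complex.norm_real, Real.norm_eq_abs,
      _root_.abs_of_nonneg (Finset.sum_nonneg fun i _ => norm_nonneg (ψ i))]
    simp

open Finset in

lemma caseB {d : ℕ} (ψ : Fin d → ℂ) (m : ℕ) (hm : 1 ≤ m)
    (hS : m ≤ (Finset.univ.filter (fun i => ψ i ≠ 0)).card) :
    ∃ ω x : Fin d → ℂ, (∀ i, ‖ω i‖ ≤ 1) ∧ (∑ i, (‖ω i‖)^2 = m) ∧
      ‖∑ i, (starRingEnd ℂ) (ψ i) * ω i‖ =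
        (∑ i, ‖ψ i - x i‖) + Real.sqrt m * Real.sqrt (∑ i, (‖x i‖)^2) := by
  classical
  set a : Fin d → ℝ := fun i => ‖ψ i‖ with hadef
  have ha0 : ∀ i, 0 ≤ a i := fun i => norm_nonneg _
  set S := Finset.univ.filter (fun i => ψ i ≠ 0) with hSdef
  have hSne : S.Nonempty := Finset.card_pos.mp (lt_of_lt_of_le hm hS)
  set p := S.inf' hSne a with hpdef
  have hp : 0 < p := by
    rw [hpdef, Finset.lt_inf'_iff]
    intro i hi
    have : ψ i ≠ 0 := by simpa [hSdef] using hi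
    simpa [hadef] using this
  have hmemS : ∀ i, i ∈ S ↔ ψ i ≠ 0 := by intro i; simp [hSdef]
  have haS : ∀ i, i ∉ S → a i = 0 := by
    intro i hi
    have : ψ i = 0 := by by_contra h; exact hi ((hmemS i).mpr h)
    simp [hadef, this]
  have hpa : ∀ i, i ∈ S → p ≤ a i := fun i hi => Finset.inf'_le a hi
  -- the function F
  set F : ℝ → ℝ := fun t => (∑ i, min (a i) t ^ 2) - m * t ^ 2 with hFdef
  have hcont : Continuous F := by
    apply Continuous.sub
    · exact continuous_finset_sum _ fun i _ =>
        ((continuous_const.min continuous_id).pow 2)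
    · continuity
  set t₁ := Real.sqrt (∑ i, a i ^ 2) + p with ht₁def
  have hpt₁ : p ≤ t₁ := le_add_of_nonneg_left (Real.sqrt_nonneg _)
  have hFp : 0 ≤ F p := by
    have : ∀ i, min (a i) p ^ 2 = if i ∈ S then p ^ 2 else 0 := by
      intro i
      by_cases hi : i ∈ S
      · rw [if_pos hi, min_eq_right (hpa i hi)]
      · rw [if_neg hi, haS i hi, min_eq_left hp.le, ]
        norm_num
    have hsum : (∑ i, min (a i) p ^ 2) = S.card * p ^ 2 := by
      rw [Finset.sum_congr rfl fun i _ => this i, Finset.sum_ite_mem, Finset.univ_inter,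
        Finset.sum_const, nsmul_eq_mul]
    rw [hFdef]
    simp only [hsum]
    have : (m : ℝ) ≤ S.card := by exact_mod_cast hS
    nlinarith [sq_nonneg p]
  have hFt₁ : F t₁ ≤ 0 := by
    have hai : ∀ i, a i ≤ t₁ := by
      intro i
      have h1 : a i = Real.sqrt (a i ^ 2) := (Real.sqrt_sq (ha0 i)).symm
      have h2 : a i ^ 2 ≤ ∑ j, a j ^ 2 :=
        Finset.single_le_sum (fun j _ => sq_nonneg (a j)) (Finset.mem_univ i)
      calc a i = Real.sqrt (a i ^ 2) := h1
        _ ≤ Real.sqrt (∑ j, a j ^ 2) := Real.sqrt_le_sqrt h2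
        _ ≤ t₁ := le_add_of_nonneg_right hp.le
    have hsum : (∑ i, min (a i) t₁ ^ 2) = ∑ i, a i ^ 2 := by
      refine Finset.sum_congr rfl fun i _ => ?_
      rw [min_eq_left (hai i)]
    rw [hFdef]
    simp only [hsum, ht₁def]
    have hs : Real.sqrt (∑ i, a i ^ 2) ^ 2 = ∑ i, a i ^ 2 :=
      Real.sq_sqrt (Finset.sum_nonneg fun i _ => sq_nonneg _)
    have hm' : (1 : ℝ) ≤ m := by exact_mod_cast hm
    nlinarith [Real.sqrt_nonneg (∑ i, a i ^ 2), hp.le, sq_nonneg (Real.sqrt (∑ i, a i ^ 2) + p)]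
  obtain ⟨c, hcmem, hFc⟩ : ∃ c ∈ Set.Icc p t₁, F c = 0 := by
    have := intermediate_value_Icc' hpt₁ hcont.continuousOn
    have h0 : (0:ℝ) ∈ Set.Icc (F t₁) (F p) := ⟨hFt₁, hFp⟩
    obtain ⟨c, hc1, hc2⟩ := this h0
    exact ⟨c, hc1, hc2⟩
  have hc : 0 < c := lt_of_lt_of_le hp hcmem.1
  have key : (∑ i, min (a i) c ^ 2) = m * c ^ 2 := by
    rw [hFdef] at hFc; simp only [sub_eq_zero] at hFc; exact hFc
  -- constructions
  set ω : Fin d → ℂ := fun i => if ψ i = 0 then 0 else (↑(min (a i) c / (c * a i)) : ℂ) * ψ i with hω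
  set x : Fin d → ℂ := fun i => if ψ i = 0 then 0 else (↑(min (a i) c / a i) : ℂ) * ψ i with hx
  have hmin0 : ∀ i, ψ i = 0 → min (a i) c = 0 := by
    intro i h
    have : a i = 0 := by simp [hadef, h]
    rw [this, min_eq_left hc.le]
  have homega : ∀ i, ‖ω i‖ = min (a i) c / c := by
    intro i
    by_cases h : ψ i = 0
    · simp [hω, h, hmin0 i h]
    · have ha : 0 < a i := by simpa [hadef] using h
      rw [hω]
      simp only [h, if_false, norm_mul, Complex.norm_real, Real.norm_eq_abs,
        _root_.abs_of_nonneg (div_nonneg (le_min (ha0 i) hc.le) (mul_nonneg hc.le ha.le))]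
      show min (a i) c / (c * a i) * a i = min (a i) c / c
      field_simp
  have hxabs : ∀ i, ‖x i‖ = min (a i) c := by
    intro i
    by_cases h : ψ i = 0
    · simp [hx, h, hmin0 i h]
    · have ha : 0 < a i := by simpa [hadef] using h
      rw [hx]
      simp only [h, if_false, norm_mul, Complex.norm_real, Real.norm_eq_abs,
        _root_.abs_of_nonneg (div_nonneg (le_min (ha0 i) hc.le) ha.le)]
      show min (a i) c / a i * a i = min (a i) c
      field_simp
  have hdiff : ∀ i, ‖ψ i - x i‖ = a i - min (a i) c := by
    intro i
    by_cases h : ψ i = 0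
    · have : a i = 0 := by simp [hadef, h]
      simp [hx, h, hmin0 i h, this, hc.le]
    · have ha : 0 < a i := by simpa [hadef] using h
      have hrw : ψ i - x i = (↑((a i - min (a i) c) / a i) : ℂ) * ψ i := by
        rw [hx]
        simp only [h, if_false]
        push_cast
        have hane : ((a i : ℝ) : ℂ) ≠ 0 := by exact_mod_cast ha.ne'
        field_simp
      rw [hrw, norm_mul, Complex.norm_real, Real.norm_eq_abs,
        _root_.abs_of_nonneg (div_nonneg (by linarith [min_le_left (a i) c]) ha.le)]
      show (a i - min (a i) c) / a i * a i = a i - min (a i) c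
      field_simp
  have hinner : (∑ i, (starRingEnd ℂ) (ψ i) * ω i) = ((∑ i, a i * min (a i) c / c : ℝ) : ℂ) := by
    rw [Complex.ofReal_sum]
    refine Finset.sum_congr rfl fun i _ => ?_
    by_cases h : ψ i = 0
    · simp [hω, h, hmin0 i h]
    · have ha : 0 < a i := by simpa [hadef] using h
      rw [hω]
      simp only [h, if_false]
      rw [show (starRingEnd ℂ) (ψ i) * ((↑(min (a i) c / (c * a i)) : ℂ) * ψ i)
          = (↑(min (a i) c / (c * a i)) : ℂ) * (ψ i * (starRingEnd ℂ) (ψ i)) by ring,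
        Complex.mul_conj, ← Complex.ofReal_mul]
      congr 1
      rw [show Complex.normSq (ψ i) = a i ^ 2 from (Complex.sq_norm (ψ i)).symm]
      field_simp
  refine ⟨ω, x, ?_, ?_, ?_⟩
  · intro i
    rw [homega i]
    exact (div_le_one hc).mpr (min_le_right _ _)
  · have : ∀ i, (‖ω i‖) ^ 2 = min (a i) c ^ 2 / c ^ 2 := by
      intro i; rw [homega i, div_pow]
    rw [Finset.sum_congr rfl fun i _ => this i, ← Finset.sum_div, key]
    field_simp
  · rw [hinner, Complex.norm_real, Real.norm_eq_abs, _root_.abs_of_nonneg (Finset.sum_nonneg fun i _ =>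
      div_nonneg (mul_nonneg (ha0 i) (le_min (ha0 i) hc.le)) hc.le)]
    have hr1 : (∑ i, (‖x i‖) ^ 2) = m * c ^ 2 := by
      rw [Finset.sum_congr rfl fun i _ => by rw [hxabs i], key]
    rw [Finset.sum_congr rfl fun i _ => hdiff i, hr1]
    have hs : Real.sqrt ((m : ℝ) * c ^ 2) = Real.sqrt m * c := by
      rw [Real.sqrt_mul (Nat.cast_nonneg m), Real.sqrt_sq hc.le]
    rw [hs, show Real.sqrt (m:ℝ) * (Real.sqrt (m:ℝ) * c) = ((m:ℝ)) * c by
      rw [← mul_assoc, Real.mul_self_sqrt (Nat.cast_nonneg m)]]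
    -- remaining: ∑ a min / c = ∑ (a - min) + m * c
    have pointwise : ∀ i, a i * min (a i) c = min (a i) c ^ 2 + c * (a i - min (a i) c) := by
      intro i
      rcases le_total (a i) c with h | h
      · rw [min_eq_left h]; ring
      · rw [min_eq_right h]; ring
    have hmul : c * (∑ i, a i * min (a i) c / c) = c * ((∑ i, (a i - min (a i) c)) + m * c) := by
      rw [Finset.mul_sum]
      rw [Finset.sum_congr rfl fun i _ => by
        rw [mul_div_cancel₀ (a i * min (a i) c) hc.ne'] ]
      rw [Finset.sum_congr rfl fun i _ => pointwise i, Finset.sum_add_distrib, key,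
        ← Finset.mul_sum]
      ring
    exact mul_left_cancel₀ hc.ne' hmul

end Helpers

theorem stmt5 {d : ℕ} (ψ : Fin d → ℂ) (m : ℕ) (hm : 1 ≤ m) (hmd : m ≤ d) :
    IsGreatest {r : ℝ | ∃ ω : Fin d → ℂ,
      (∀ i, ‖ω i‖ ≤ 1) ∧ (∑ i, (‖ω i‖)^2 = m) ∧
      r = ‖∑ i, (starRingEnd ℂ) (ψ i) * ω i‖} (distNorm m ψ) := by
  classical
  have hdn : distNorm m ψ = ⨅ x : Fin d → ℂ, ((∑ i, ‖ψ i - x i‖) +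
      Real.sqrt m * Real.sqrt (∑ i, (‖x i‖)^2)) := rfl
  have hbdd : BddBelow (Set.range fun x : Fin d → ℂ => ((∑ i, ‖ψ i - x i‖) +
      Real.sqrt m * Real.sqrt (∑ i, (‖x i‖)^2))) := by
    refine ⟨0, ?_⟩
    rintro r ⟨x, rfl⟩
    exact add_nonneg (Finset.sum_nonneg fun i _ => norm_nonneg _)
      (mul_nonneg (Real.sqrt_nonneg _) (Real.sqrt_nonneg _))
  have hub : ∀ (ω : Fin d → ℂ), (∀ i, ‖ω i‖ ≤ 1) →
      (∑ i, (‖ω i‖)^2 = m) →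
      ‖∑ i, (starRingEnd ℂ) (ψ i) * ω i‖ ≤ distNorm m ψ := by
    intro ω h1 h2
    rw [hdn]
    exact le_ciInf fun x => aux_upper ψ ω x m h1 h2
  constructor
  · by_cases hcase : m ≤ (Finset.univ.filter (fun i => ψ i ≠ 0)).card
    · obtain ⟨ω, x, h1, h2, heq⟩ := caseB ψ m hm hcase
      refine ⟨ω, h1, h2, ?_⟩
      have hle : distNorm m ψ ≤ ‖∑ i, (starRingEnd ℂ) (ψ i) * ω i‖ := by
        rw [heq, hdn]
        exact ciInf_le hbdd x
      exact le_antisymm hle (hub ω h1 h2)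
    · obtain ⟨ω, h1, h2, heq⟩ := caseA ψ m hm hmd (not_le.mp hcase)
      refine ⟨ω, h1, h2, ?_⟩
      have hle : distNorm m ψ ≤ ‖∑ i, (starRingEnd ℂ) (ψ i) * ω i‖ := by
        rw [heq, hdn]
        exact ciInf_le hbdd 0
      exact le_antisymm hle (hub ω h1 h2)
  · rintro r ⟨ω, h1, h2, rfl⟩
    exact hub ω h1 h2

end
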